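/- arXiv:1811.12041 — 2 statements merged into one kernel-verified Lean document; each statement's English description precedes it below -/
import Mathlib

section
/- Let ξ ∈ so(n) be such that ξ is the canonical element of a parabolic subalgebra, i.e. ad ξ has eigenvalues in iℤ or i(ℤ+1/2) and so(n,ℂ) is generated by g_{−1} ⊕ g_0 ⊕ g_1. If ξ has half-integer eigenvalues, then the eigenvalues ±i/2 of ξ on ℂⁿ have multiplicity at least 2. -/
open Matrix Complex Module

attribute [local instance 100] LieRing.ofAssociativeRing

/-- The complex skew-symmetric matrices `so(n,ℂ)` as a subspace of all matrices. -/
noncomputable def soC (n : ℕ) : Submodule ℂ (Matrix (Fin n) (Fin n) ℂ) where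
  carrier := {A | Aᵀ = -A}
  add_mem' := by intro a b ha hb; simp only [Set.mem_setOf_eq] at *; simp [Matrix.transpose_add, ha, hb, neg_add]; abel
  zero_mem' := by simp
  smul_mem' := by intro c a ha; simp only [Set.mem_setOf_eq] at *; simp [Matrix.transpose_smul, ha]

/-- The `(i r)`-eigenspace of `ad ξ` on `so(n,ℂ)`, for `ξ ∈ so(n)` real skew-symmetric,
as a subspace of complex matrices. -/
noncomputable def adEig {n : ℕ} (ξ : Matrix (Fin n) (Fin n) ℝ) (r : ℝ) :
    Submodule ℂ (Matrix (Fin n) (Fin n) ℂ) :=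
  soC n ⊓ Module.End.eigenspace
    (LieAlgebra.ad ℂ (Matrix (Fin n) (Fin n) ℂ) (ξ.map (Complex.ofReal))) (r * Complex.I)

open Matrix Complex Module

def skewE {n : ℕ} (i j : Fin n) : Matrix (Fin n) (Fin n) ℂ :=
  fun a b => (if a = i ∧ b = j then (1:ℂ) else 0) - (if a = j ∧ b = i then 1 else 0)

lemma skewE_skew {n : ℕ} (i j : Fin n) : (skewE i j)ᵀ = -(skewE i j) := by
  ext a b
  simp only [skewE, transpose_apply, Matrix.neg_apply, neg_sub]
  congr 1 <;> simp [and_comm]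

lemma skewE_mulVec {n : ℕ} (i j : Fin n) (x : Fin n → ℂ) (a : Fin n) :
    (skewE i j *ᵥ x) a = (if a = i then x j else 0) - (if a = j then x i else 0) := by
  simp only [skewE, mulVec, dotProduct, sub_mul, Finset.sum_sub_distrib, ite_mul, one_mul,
    zero_mul]
  congr 1
  · by_cases h : a = i <;> simp [h]
  · by_cases h : a = j <;> simp [h]

lemma exists_third {n : ℕ} (hn : 3 ≤ n) (j k : Fin n) : ∃ i : Fin n, i ≠ j ∧ i ≠ k := by
  by_contra h
  push_neg at h
  have hsub : (Finset.univ : Finset (Fin n)) ⊆ {j, k} := by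
    intro i _
    rcases Classical.em (i = j) with hij | hij
    · simp [hij]
    · simp [h i hij]
  have h2 : (Finset.univ : Finset (Fin n)).card ≤ ({j, k} : Finset (Fin n)).card :=
    Finset.card_le_card hsub
  have h3 : ({j, k} : Finset (Fin n)).card ≤ 2 :=
    (Finset.card_insert_le _ _).trans (by simp)
  simp [Finset.card_univ] at h2
  omega

/-- Irreducibility of the standard rep of so(n,ℂ), n ≥ 3. -/
lemma skew_irred {n : ℕ} (hn : 3 ≤ n) (W : Submodule ℂ (Fin n → ℂ))
    (hW : ∀ A : Matrix (Fin n) (Fin n) ℂ, Aᵀ = -A → ∀ w ∈ W, A *ᵥ w ∈ W)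
    (hne : W ≠ ⊥) : W = ⊤ := by
  obtain ⟨w, hwW, hw0⟩ := Submodule.exists_mem_ne_zero_of_ne_bot hne
  obtain ⟨k, hk⟩ : ∃ k, w k ≠ 0 := by
    by_contra h; push_neg at h; exact hw0 (funext h)
  have step1 : ∀ i : Fin n, i ≠ k →
      (fun a => (if a = i then w k else 0) - (if a = k then w i else 0)) ∈ W := by
    intro i hik
    have := hW (skewE i k) (skewE_skew i k) w hwW
    convert this using 1
    funext a
    rw [skewE_mulVec]
  have step2a : ∀ j : Fin n, j ≠ k → (fun a => if a = j then (1:ℂ) else 0) ∈ W := by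
    intro j hjk
    obtain ⟨i, hij, hik⟩ := exists_third hn j k
    have hu := step1 i hik
    have hmem := hW (skewE j i) (skewE_skew j i) _ hu
    have key : (skewE j i *ᵥ (fun a => (if a = i then w k else 0) - (if a = k then w i else 0)))
        = fun a => if a = j then w k else 0 := by
      funext a
      rw [skewE_mulVec]
      by_cases haj : a = j <;> by_cases hai : a = i
      · exact absurd (hai ▸ haj : (i:Fin n) = j) (by simpa using hij)
      · subst haj; simp [hai, (Ne.symm hij), hjk, hik.symm]; intro h; simp_all
      · subst hai; simp [haj, hij, hik, (Ne.symm hij)]; intro h; simp_all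
      · simp [haj, hai]
    rw [key] at hmem
    have hsm := W.smul_mem (w k)⁻¹ hmem
    convert hsm using 1
    funext a
    by_cases haj : a = j <;> simp [haj, hk]
  have step2 : ∀ j : Fin n, (fun a => if a = j then (1:ℂ) else 0) ∈ W := by
    intro j
    rcases Classical.em (j = k) with rfl | hjk
    · obtain ⟨i, hij, hik⟩ := exists_third hn j j
      have hei := step2a i hij
      have hmem := hW (skewE j i) (skewE_skew j i) _ hei
      have key : (skewE j i *ᵥ (fun a => if a = i then (1:ℂ) else 0))
          = fun a => if a = j then (1:ℂ) else 0 := by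
        funext a
        rw [skewE_mulVec]
        by_cases haj : a = j <;> by_cases hai : a = i
        · exact absurd (hai ▸ haj : (i:Fin n) = j) (by simpa using hij)
        · simp [haj, hai, (Ne.symm hij)]
        · subst hai; simp [haj, hij, (Ne.symm hij)]
        · simp [haj, hai]
      rwa [key] at hmem
    · exact step2a j hjk
  rw [Submodule.eq_top_iff']
  intro x
  have hx : x = ∑ i : Fin n, x i • (fun a => if a = i then (1:ℂ) else 0) := by
    funext a
    simp [Finset.sum_apply]
  rw [hx]
  exact Submodule.sum_mem _ fun i _ => W.smul_mem _ (step2 i)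

variable {n : ℕ}

lemma herm_of_skew (ξ : Matrix (Fin n) (Fin n) ℝ) (hskew : ξᵀ = -ξ) :
    (Complex.I • ξ.map Complex.ofReal).IsHermitian := by
  have h : ∀ a b, ξ b a = - ξ a b := by
    intro a b
    have := congrFun (congrFun hskew a) b
    simpa [Matrix.transpose_apply] using this
  ext a b
  simp only [Matrix.conjTranspose_apply, Matrix.smul_apply, Matrix.map_apply, star_smul,
    Complex.star_def, Complex.conj_ofReal, smul_eq_mul]
  rw [h b a, RingHom.map_mul, Complex.conj_I, Complex.conj_ofReal]
  push_cast
  ring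

lemma eigvec_mulVec (ξ : Matrix (Fin n) (Fin n) ℝ) (hskew : ξᵀ = -ξ) (i : Fin n) :
    (ξ.map Complex.ofReal) *ᵥ ((herm_of_skew ξ hskew).eigenvectorBasis i : Fin n → ℂ)
      = ((-(herm_of_skew ξ hskew).eigenvalues i : ℝ) * Complex.I : ℂ)
        • ((herm_of_skew ξ hskew).eigenvectorBasis i : Fin n → ℂ) := by
  have h := (herm_of_skew ξ hskew).mulVec_eigenvectorBasis i
  set v : Fin n → ℂ := ((herm_of_skew ξ hskew).eigenvectorBasis i : Fin n → ℂ) with hv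
  have h' : Complex.I • ((ξ.map Complex.ofReal) *ᵥ v)
      = ((herm_of_skew ξ hskew).eigenvalues i : ℂ) • v := by
    rw [← Matrix.smul_mulVec]
    convert h using 2
    ext a
    simp [Complex.real_smul]
  have := congrArg (fun x => (-Complex.I) • x) h'
  simp only [smul_smul, neg_mul, Complex.I_mul_I, neg_neg, one_smul] at this
  rw [this]
  congr 1
  push_cast
  ring

lemma eig_sub_span {n : ℕ} {M : Type*} [AddCommGroup M] [Module ℂ M]
    (B : Basis (Fin n) ℂ M) (f : M →ₗ[ℂ] M) (μ : Fin n → ℂ)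
    (hf : ∀ i, f (B i) = μ i • B i) (c : ℂ) (v : M)
    (hv : v ∈ Module.End.eigenspace f c) :
    v ∈ Submodule.span ℂ (B '' {i | μ i = c}) := by
  rw [Basis.mem_span_image]
  intro i hi
  simp only [Finset.mem_coe, Finsupp.mem_support_iff] at hi
  by_contra hne
  simp only [Set.mem_setOf_eq] at hne
  apply hi
  have h1 : f v = c • v := Module.End.mem_eigenspace_iff.mp hv
  have hA : B.repr (f v) i = c * B.repr v i := by
    rw [h1, _root_.map_smul, Finsupp.smul_apply, smul_eq_mul]
  have hfv : f v = ∑ j, (B.repr v j * μ j) • B j := by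
    conv_lhs => rw [← B.sum_repr v]
    rw [map_sum]
    simp only [_root_.map_smul, hf, smul_smul]
  have hB : B.repr (f v) i = μ i * B.repr v i := by
    rw [hfv, map_sum]
    simp only [_root_.map_smul, Basis.repr_self]
    rw [Finsupp.finset_sum_apply]
    simp only [Finsupp.smul_apply, Finsupp.single_apply, smul_eq_mul]
    rw [Finset.sum_eq_single i]
    · simp; ring
    · intro j _ hji; simp [hji]
    · simp
  have := hA.symm.trans hB
  have h2 : (μ i - c) * B.repr v i = 0 := by linear_combination -this
  rcases mul_eq_zero.mp h2 with h | h
  · exact absurd (by linear_combination h) hne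
  · exact h
lemma star_mulVec_real (ξ : Matrix (Fin n) (Fin n) ℝ) (v : Fin n → ℂ) :
    (ξ.map Complex.ofReal) *ᵥ (star v) = star ((ξ.map Complex.ofReal) *ᵥ v) := by
  funext a
  simp only [Matrix.mulVec, dotProduct, Pi.star_apply, star_sum, star_mul',
    Matrix.map_apply, Complex.star_def, Complex.conj_ofReal]

lemma dot_self_skew (A : Matrix (Fin n) (Fin n) ℂ) (hA : Aᵀ = -A) (x : Fin n → ℂ) :
    x ⬝ᵥ (A *ᵥ x) = 0 := by
  have h1 : x ⬝ᵥ (A *ᵥ x) = (Aᵀ *ᵥ x) ⬝ᵥ x := by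
    rw [Matrix.dotProduct_mulVec, Matrix.mulVec_transpose]
  rw [hA, Matrix.neg_mulVec, neg_dotProduct, dotProduct_comm] at h1
  have h2 : (A *ᵥ x) ⬝ᵥ x = 0 := by linear_combination h1 / 2
  rw [dotProduct_comm]
  exact h2

lemma star_dot_self_ne (w : Fin n → ℂ) (hw : w ≠ 0) : star w ⬝ᵥ w ≠ 0 := by
  have hsum : star w ⬝ᵥ w = ((∑ a, Complex.normSq (w a) : ℝ) : ℂ) := by
    push_cast
    simp only [dotProduct, Pi.star_apply, Complex.star_def]
    congr 1
    funext a
    rw [mul_comm, Complex.mul_conj]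
  rw [hsum]
  rw [Ne, Complex.ofReal_eq_zero]
  obtain ⟨a, ha⟩ : ∃ a, w a ≠ 0 := by
    by_contra h; push_neg at h; exact hw (funext h)
  have hpos : 0 < ∑ a, Complex.normSq (w a) :=
    Finset.sum_pos' (fun i _ => Complex.normSq_nonneg _)
      ⟨a, Finset.mem_univ a, Complex.normSq_pos.mpr ha⟩
  exact ne_of_gt hpos

lemma mem_soC {n : ℕ} {A : Matrix (Fin n) (Fin n) ℂ} : A ∈ soC n ↔ Aᵀ = -A := Iff.rfl

set_option maxHeartbeats 2000000 in
lemma main_half {n : ℕ} (hn : 3 ≤ n)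
    (ξ : Matrix (Fin n) (Fin n) ℝ) (hskew : ξᵀ = -ξ)
    (hhalf : ∀ lam : ℝ,
      Module.End.HasEigenvalue (Matrix.toLin' (ξ.map (Complex.ofReal))) (lam * Complex.I) →
      ∃ m : ℤ, lam = (m : ℝ) + 1 / 2)
    (hgen : (LieSubalgebra.lieSpan ℂ (Matrix (Fin n) (Fin n) ℂ)
        ((adEig ξ (-1) : Set (Matrix (Fin n) (Fin n) ℂ))
          ∪ (adEig ξ 0 : Set (Matrix (Fin n) (Fin n) ℂ))
          ∪ (adEig ξ 1 : Set (Matrix (Fin n) (Fin n) ℂ)))).toSubmodule = soC n) :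
    2 ≤ Module.finrank ℂ (Module.End.eigenspace
        (Matrix.toLin' (ξ.map (Complex.ofReal))) ((1 / 2 : ℝ) * Complex.I)) := by
  by_contra hcon
  push_neg at hcon
  set ξc : Matrix (Fin n) (Fin n) ℂ := ξ.map Complex.ofReal with hξc
  set f : (Fin n → ℂ) →ₗ[ℂ] (Fin n → ℂ) := Matrix.toLin' ξc with hfdef
  have hM := herm_of_skew ξ hskew
  set lam : Fin n → ℝ := fun i => -(hM.eigenvalues i) with hlam
  set bv : Fin n → (Fin n → ℂ) := fun i => (hM.eigenvectorBasis i : Fin n → ℂ) with hbvdef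
  have hbv : ∀ i, ξc *ᵥ bv i = (((lam i : ℝ) : ℂ) * Complex.I) • bv i := fun i =>
    eigvec_mulVec ξ hskew i
  -- the eigenspaces as V t
  set V : ℝ → Submodule ℂ (Fin n → ℂ) :=
    fun t => Module.End.eigenspace f (((t : ℝ) : ℂ) * Complex.I) with hVdef
  have hmemV : ∀ (t : ℝ) (v : Fin n → ℂ), v ∈ V t ↔ ξc *ᵥ v = (((t:ℝ):ℂ) * Complex.I) • v := by
    intro t v
    rw [hVdef]
    rw [Module.End.mem_eigenspace_iff, hfdef, Matrix.toLin'_apply]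
  have hbvV : ∀ i, bv i ∈ V (lam i) := fun i => (hmemV _ _).mpr (hbv i)
  have hbvne : ∀ i, bv i ≠ 0 := fun i h => hM.eigenvectorBasis.orthonormal.ne_zero i ((WithLp.ofLp_eq_zero 2).mp h)
  -- the transported basis
  set B : Basis (Fin n) ℂ (Fin n → ℂ) :=
    (hM.eigenvectorBasis.toBasis).map (WithLp.linearEquiv 2 ℂ (Fin n → ℂ)) with hBdef
  have hB : ∀ i, B i = bv i := by
    intro i
    rw [hBdef, Basis.map_apply, OrthonormalBasis.coe_toBasis]
    rfl
  have hfB : ∀ i, f (B i) = ((((lam i : ℝ) : ℂ)) * Complex.I) • B i := by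
    intro i
    rw [hB i, hfdef, Matrix.toLin'_apply, hbv i]
  -- eigenspace inside span of eigen-basis-vectors
  have hVspan : ∀ (t : ℝ) (v : Fin n → ℂ), v ∈ V t →
      v ∈ Submodule.span ℂ (bv '' {i | lam i = t}) := by
    intro t v hv
    have hset : {i : Fin n | (((lam i : ℝ) : ℂ)) * Complex.I = ((t:ℝ):ℂ) * Complex.I}
        = {i | lam i = t} := by
      ext i
      simp only [Set.mem_setOf_eq]
      constructor
      · intro h
        have := mul_right_cancel₀ Complex.I_ne_zero h
        exact_mod_cast this
      · intro h; rw [h]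
    have := eig_sub_span B f (fun i => (((lam i : ℝ) : ℂ)) * Complex.I) hfB
      (((t:ℝ):ℂ) * Complex.I) v hv
    rw [hset] at this
    have himg : B '' {i | lam i = t} = bv '' {i | lam i = t} := by
      apply Set.image_congr
      intro i _
      exact hB i
    rwa [himg] at this
  -- eigenvalues are half integers
  have hlamhalf : ∀ i, ∃ m : ℤ, lam i = (m : ℝ) + 1 / 2 := by
    intro i
    apply hhalf
    exact Module.End.hasEigenvalue_of_hasEigenvector ⟨hbvV i, hbvne i⟩
  have hlamne : ∀ i, lam i ≠ 0 := by
    intro i h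
    obtain ⟨m, hm⟩ := hlamhalf i
    rw [h] at hm
    have : (2 : ℝ) * ((m : ℝ) + 1/2) = 0 := by rw [← hm]; ring
    have : (2*m + 1 : ℝ) = 0 := by push_cast; linarith
    have : (2*m + 1 : ℤ) = 0 := by exact_mod_cast this
    omega
  -- star maps V t to V (-t)
  have hstarV : ∀ (t : ℝ) (v : Fin n → ℂ), v ∈ V t → star v ∈ V (-t) := by
    intro t v hv
    rw [hmemV] at hv ⊢
    rw [star_mulVec_real, hv]
    funext a
    simp only [Pi.smul_apply, Pi.star_apply, smul_eq_mul, star_mul', Complex.star_def,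
      _root_.map_mul, Complex.conj_I, Complex.conj_ofReal]
    push_cast
    ring
  -- half ± : structural facts
  have hlam_neg_le : ∀ i, lam i < 0 → lam i ≤ -(1/2) := by
    intro i hi
    obtain ⟨m, hm⟩ := hlamhalf i
    rw [hm] at hi ⊢
    have hmlt : (m:ℝ) < -1/2 := by linarith
    have : m ≤ -1 := by
      by_contra h
      push_neg at h
      have : (0:ℝ) ≤ (m:ℝ) := by exact_mod_cast (by omega : (0:ℤ) ≤ m)
      linarith
    have : (m:ℝ) ≤ -1 := by exact_mod_cast this
    linarith
  have hlam_eq_half : ∀ i, lam i < 0 → -1 ≤ lam i → lam i = -(1/2) := by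
    intro i h1 h2
    obtain ⟨m, hm⟩ := hlamhalf i
    rw [hm] at h1 h2 ⊢
    have hma : (-3/2 : ℝ) ≤ (m:ℝ) := by linarith
    have hmb : (m:ℝ) < -1/2 := by linarith
    have : m = -1 := by
      have h1' : (-2 : ℤ) < m := by exact_mod_cast (by push_cast; linarith : ((-2:ℤ):ℝ) < (m:ℝ))
      have h2' : m < 0 := by exact_mod_cast (by push_cast; linarith : ((m:ℤ):ℝ) < ((0:ℤ):ℝ))
      omega
    rw [this]
    norm_num
  -- the crucial consequence of multiplicity ≤ 1 : skew matrices kill V(-1/2) → V(1/2)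
  have hker : ∀ A : Matrix (Fin n) (Fin n) ℂ, Aᵀ = -A →
      ∀ v, v ∈ V (-(1/2)) → A *ᵥ v ∈ V (1/2) → A *ᵥ v = 0 := by
    intro A hA v hv hAv
    rcases Classical.em (V (1/2) = ⊥) with hbot | hbot
    · have := hAv
      rw [hbot, Submodule.mem_bot] at this
      exact this
    · rcases Classical.em (v = 0) with rfl | hv0
      · simp [Matrix.mulVec_zero]
      -- one-dimensional V(1/2) with generator w₀
      have hle1 : Module.finrank ℂ (V (1/2)) ≤ 1 := Nat.lt_succ_iff.mp hcon
      obtain ⟨v₀, hv₀⟩ := finrank_le_one_iff.mp hle1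
      have hv₀ne : (v₀ : Fin n → ℂ) ≠ 0 := by
        intro h0
        apply hbot
        rw [Submodule.eq_bot_iff]
        intro u hu
        obtain ⟨c, hc⟩ := hv₀ ⟨u, hu⟩
        have := congrArg (Subtype.val) hc
        simp only [Submodule.coe_smul, h0, smul_zero] at this
        exact this.symm
      set w₀ : Fin n → ℂ := (v₀ : Fin n → ℂ) with hw₀def
      have hw₀V : w₀ ∈ V (1/2) := v₀.2
      -- star v ∈ V (1/2), hence star v = e • w₀, v = conj e • star w₀
      have hsv : star v ∈ V (1/2) := by
        have := hstarV (-(1/2)) v hv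
        simpa using this
      obtain ⟨e, he⟩ := hv₀ ⟨star v, hsv⟩
      have he' : star v = e • w₀ := by
        have := congrArg (Subtype.val) he
        simpa using this.symm
      have hvform : v = star e • star w₀ := by
        have := congrArg star he'
        simpa [star_smul] using this
      have hene : e ≠ 0 := by
        intro h0
        rw [h0, zero_smul] at he'
        exact hv0 (by simpa using congrArg star he')
      -- A *ᵥ v = c • w₀
      obtain ⟨c, hc⟩ := hv₀ ⟨A *ᵥ v, hAv⟩
      have hc' : A *ᵥ v = c • w₀ := by
        have := congrArg (Subtype.val) hc
        simpa using this.symm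
      -- skewness : v ⬝ᵥ A *ᵥ v = 0
      have hzero := dot_self_skew A hA v
      rw [hc', hvform] at hzero
      have hdot : (star e * c) * (star w₀ ⬝ᵥ w₀) = 0 := by
        rw [← hzero]
        simp only [smul_dotProduct, dotProduct_smul, smul_eq_mul]
        ring
      have hwdne := star_dot_self_ne w₀ hv₀ne
      have : star e * c = 0 := by
        rcases mul_eq_zero.mp hdot with h | h
        · exact h
        · exact absurd h hwdne
      rcases mul_eq_zero.mp this with h | h
      · exact absurd h (star_ne_zero.mpr hene)
      · rw [hc', h, zero_smul]
  -- the invariant subspace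
  set W : Submodule ℂ (Fin n → ℂ) := Submodule.span ℂ (bv '' {i | lam i < 0}) with hWdef
  have hWV : ∀ t : ℝ, t < 0 → ∀ v, v ∈ V t → v ∈ W := by
    intro t ht v hv
    have h := hVspan t v hv
    refine Submodule.span_mono (Set.image_mono ?_) h
    intro i hi
    simp only [Set.mem_setOf_eq] at hi ⊢
    rw [hi]; exact ht
  -- the stabilizer Lie subalgebra of W
  set stab : LieSubalgebra ℂ (Matrix (Fin n) (Fin n) ℂ) :=
    { carrier := {A | ∀ w ∈ W, A *ᵥ w ∈ W}
      add_mem' := by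
        intro a b ha hb w hw
        rw [Matrix.add_mulVec]
        exact W.add_mem (ha w hw) (hb w hw)
      zero_mem' := by
        intro w hw
        rw [Matrix.zero_mulVec]
        exact W.zero_mem
      smul_mem' := by
        intro c a ha w hw
        rw [Matrix.smul_mulVec]
        exact W.smul_mem c (ha w hw)
      lie_mem' := by
        intro a b ha hb w hw
        rw [Ring.lie_def, Matrix.sub_mulVec, ← Matrix.mulVec_mulVec, ← Matrix.mulVec_mulVec]
        exact W.sub_mem (ha _ (hb w hw)) (hb _ (ha w hw)) } with hstabdef
  have hstab_mem : ∀ A : Matrix (Fin n) (Fin n) ℂ,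
      (A ∈ stab ↔ ∀ w ∈ W, A *ᵥ w ∈ W) := fun A => Iff.rfl
  -- adEig elements shift eigenspaces
  have hshift : ∀ (r : ℝ) (A : Matrix (Fin n) (Fin n) ℂ), A ∈ adEig ξ r →
      ∀ (t : ℝ) (v : Fin n → ℂ), v ∈ V t → A *ᵥ v ∈ V (t + r) := by
    intro r A hA t v hv
    obtain ⟨hAso, hAeig⟩ := Submodule.mem_inf.mp hA
    rw [Module.End.mem_eigenspace_iff, LieAlgebra.ad_apply, Ring.lie_def] at hAeig
    have hcomm : ξc * A = A * ξc + ((r : ℂ) * Complex.I) • A := by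
      rw [← hAeig]; abel
    rw [hmemV] at hv ⊢
    rw [Matrix.mulVec_mulVec, hcomm, Matrix.add_mulVec, Matrix.smul_mulVec,
      ← Matrix.mulVec_mulVec, hv, Matrix.mulVec_smul]
    rw [← add_smul]
    congr 1
    push_cast
    ring
  have hgens : ∀ (r : ℝ), (r = -1 ∨ r = 0 ∨ r = 1) →
      ∀ A ∈ adEig ξ r, A ∈ stab := by
    intro r hr A hA
    have hAskew : Aᵀ = -A := (Submodule.mem_inf.mp hA).1
    rw [hstab_mem]
    intro w hw
    refine Submodule.span_induction ?_ ?_ ?_ ?_ hw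
    · rintro x ⟨i, hi, rfl⟩
      simp only [Set.mem_setOf_eq] at hi
      rcases lt_or_ge (lam i + r) 0 with hlt | hge
      · exact hWV _ hlt _ (hshift r A hA (lam i) (bv i) (hbvV i))
      · have hrle : r ≤ 1 := by rcases hr with rfl | rfl | rfl <;> norm_num
        have hl1 : -1 ≤ lam i := by linarith
        have hl2 : lam i = -(1/2) := hlam_eq_half i hi hl1
        have hr1 : r = 1 := by
          rcases hr with rfl | rfl | rfl <;> [skip; skip; rfl] <;> (exfalso; rw [hl2] at hge; norm_num at hge)
        have hmem12 : A *ᵥ bv i ∈ V (1/2) := by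
          have := hshift r A hA (lam i) (bv i) (hbvV i)
          rw [hl2, hr1] at this
          convert this using 2
          norm_num
        have hbvmem : bv i ∈ V (-(1/2)) := by
          have := hbvV i
          rwa [hl2] at this
        rw [hker A hAskew (bv i) hbvmem hmem12]
        exact W.zero_mem
    · simp [Matrix.mulVec_zero, W.zero_mem]
    · intro x y _ _ hx hy
      rw [Matrix.mulVec_add]
      exact W.add_mem hx hy
    · intro c x _ hx
      rw [Matrix.mulVec_smul]
      exact W.smul_mem c hx
  -- every skew matrix stabilizes W
  have hstab_all : ∀ A : Matrix (Fin n) (Fin n) ℂ, Aᵀ = -A → ∀ w ∈ W, A *ᵥ w ∈ W := by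
    intro A hA
    have hAmem : A ∈ (LieSubalgebra.lieSpan ℂ (Matrix (Fin n) (Fin n) ℂ)
        ((adEig ξ (-1) : Set (Matrix (Fin n) (Fin n) ℂ))
          ∪ (adEig ξ 0 : Set (Matrix (Fin n) (Fin n) ℂ))
          ∪ (adEig ξ 1 : Set (Matrix (Fin n) (Fin n) ℂ)))) := by
      rw [← LieSubalgebra.mem_toSubmodule, hgen]
      exact hA
    have hsub : ((adEig ξ (-1) : Set (Matrix (Fin n) (Fin n) ℂ))
          ∪ (adEig ξ 0 : Set (Matrix (Fin n) (Fin n) ℂ))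
          ∪ (adEig ξ 1 : Set (Matrix (Fin n) (Fin n) ℂ))) ⊆ (stab : Set (Matrix (Fin n) (Fin n) ℂ)) := by
      intro A' h'
      rcases h' with (h' | h') | h'
      · exact hgens (-1) (Or.inl rfl) A' h'
      · exact hgens 0 (Or.inr (Or.inl rfl)) A' h'
      · exact hgens 1 (Or.inr (Or.inr rfl)) A' h'
    have := LieSubalgebra.lieSpan_le.mpr hsub hAmem
    rw [hstab_mem] at this
    exact this
  -- existence of positive and negative eigenvalues
  have i0 : Fin n := ⟨0, by omega⟩
  have hnonempty : ∀ (t : ℝ), (∃ v : Fin n → ℂ, v ≠ 0 ∧ v ∈ V t) → ∃ j, lam j = t := by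
    rintro t ⟨v, hv0, hv⟩
    have hsp := hVspan t v hv
    by_contra h
    push_neg at h
    have hempty : {i : Fin n | lam i = t} = ∅ := by
      ext i; simp [h i]
    rw [hempty, Set.image_empty, Submodule.span_empty, Submodule.mem_bot] at hsp
    exact hv0 hsp
  have hpm : (∃ i, lam i < 0) ∧ (∃ j, 0 < lam j) := by
    rcases lt_trichotomy (lam i0) 0 with h | h | h
    · refine ⟨⟨i0, h⟩, ?_⟩
      obtain ⟨j, hj⟩ := hnonempty (-(lam i0))
        ⟨star (bv i0), star_ne_zero.mpr (hbvne i0), hstarV _ _ (hbvV i0)⟩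
      exact ⟨j, by rw [hj]; linarith⟩
    · exact absurd h (hlamne i0)
    · refine ⟨?_, ⟨i0, h⟩⟩
      obtain ⟨j, hj⟩ := hnonempty (-(lam i0))
        ⟨star (bv i0), star_ne_zero.mpr (hbvne i0), hstarV _ _ (hbvV i0)⟩
      exact ⟨j, by rw [hj]; linarith⟩
  obtain ⟨⟨ineg, hineg⟩, ⟨jpos, hjpos⟩⟩ := hpm
  have hWbot : W ≠ ⊥ := by
    intro hbot
    have : bv ineg ∈ W := Submodule.subset_span ⟨ineg, hineg, rfl⟩
    rw [hbot, Submodule.mem_bot] at this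
    exact hbvne ineg this
  have hWtop : W ≠ ⊤ := by
    intro htop
    have himg : bv '' {i | lam i < 0} = B '' {i | lam i < 0} :=
      (Set.image_congr fun i _ => (hB i).symm).symm
    have hnot : B jpos ∉ Submodule.span ℂ (B '' {i | lam i < 0}) := by
      apply B.linearIndependent.notMem_span_image
      simp only [Set.mem_setOf_eq, not_lt]
      linarith
    apply hnot
    rw [← himg, ← hWdef]
    rw [htop]
    exact Submodule.mem_top
  exact hWtop (skew_irred hn W hstab_all hWbot)


lemma eigenspace_neg {M : Type*} [AddCommGroup M] [Module ℂ M] (f : Module.End ℂ M) (μ : ℂ) :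
    Module.End.eigenspace (-f) μ = Module.End.eigenspace f (-μ) := by
  ext v
  rw [Module.End.mem_eigenspace_iff, Module.End.mem_eigenspace_iff, LinearMap.neg_apply,
    neg_eq_iff_eq_neg, ← neg_smul]

lemma neg_map_ofReal {n : ℕ} (ξ : Matrix (Fin n) (Fin n) ℝ) :
    (-ξ).map Complex.ofReal = -(ξ.map Complex.ofReal) := by
  ext i j
  simp [Matrix.map_apply]

lemma adEig_neg {n : ℕ} (ξ : Matrix (Fin n) (Fin n) ℝ) (r : ℝ) :
    adEig (-ξ) r = adEig ξ (-r) := by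
  unfold adEig
  congr 1
  rw [neg_map_ofReal]
  rw [show (LieAlgebra.ad ℂ (Matrix (Fin n) (Fin n) ℂ) (-(ξ.map Complex.ofReal)))
      = -(LieAlgebra.ad ℂ (Matrix (Fin n) (Fin n) ℂ) (ξ.map Complex.ofReal)) from
    LinearMap.ext fun y => by simp [LieAlgebra.ad_apply, neg_lie]]
  rw [eigenspace_neg]
  congr 1
  push_cast
  ring

/-- If `ξ ∈ so(n)` (`n ≥ 3`) is canonical — i.e. `so(n,ℂ)` is generated by
`g_{-1} ⊕ g_0 ⊕ g_1` — and the eigenvalues of `ξ` on `ℂⁿ` are half-integers, then the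
eigenvalues `± i/2` of `ξ` have multiplicity at least `2`. -/
theorem half_eigenvalue_multiplicity_ge_two {n : ℕ} (hn : 3 ≤ n)
    (ξ : Matrix (Fin n) (Fin n) ℝ) (hskew : ξᵀ = -ξ)
    (hhalf : ∀ lam : ℝ,
      Module.End.HasEigenvalue (Matrix.toLin' (ξ.map (Complex.ofReal))) (lam * Complex.I) →
      ∃ m : ℤ, lam = (m : ℝ) + 1 / 2)
    (hgen : (LieSubalgebra.lieSpan ℂ (Matrix (Fin n) (Fin n) ℂ)
        ((adEig ξ (-1) : Set (Matrix (Fin n) (Fin n) ℂ))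
          ∪ (adEig ξ 0 : Set (Matrix (Fin n) (Fin n) ℂ))
          ∪ (adEig ξ 1 : Set (Matrix (Fin n) (Fin n) ℂ)))).toSubmodule = soC n) :
    2 ≤ Module.finrank ℂ (Module.End.eigenspace
        (Matrix.toLin' (ξ.map (Complex.ofReal))) ((1 / 2 : ℝ) * Complex.I)) ∧
    2 ≤ Module.finrank ℂ (Module.End.eigenspace
        (Matrix.toLin' (ξ.map (Complex.ofReal))) ((-(1 / 2) : ℝ) * Complex.I)) := by
  have hTneg : Matrix.toLin' ((-ξ).map Complex.ofReal)
      = -(Matrix.toLin' (ξ.map Complex.ofReal)) := by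
    rw [neg_map_ofReal, map_neg]
  have hespace : ∀ lam : ℝ,
      Module.End.eigenspace (Matrix.toLin' ((-ξ).map Complex.ofReal)) ((lam : ℂ) * Complex.I)
      = Module.End.eigenspace (Matrix.toLin' (ξ.map Complex.ofReal)) (((-lam : ℝ) : ℂ) * Complex.I) := by
    intro lam
    rw [hTneg, eigenspace_neg]
    congr 1
    push_cast
    ring
  have hskew' : (-ξ)ᵀ = -(-ξ) := by rw [Matrix.transpose_neg, hskew]
  have hhalf' : ∀ lam : ℝ,
      Module.End.HasEigenvalue (Matrix.toLin' ((-ξ).map (Complex.ofReal))) (lam * Complex.I) →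
      ∃ m : ℤ, lam = (m : ℝ) + 1 / 2 := by
    intro lam h
    rw [Module.End.hasEigenvalue_iff, hespace lam, ← Module.End.hasEigenvalue_iff] at h
    obtain ⟨m, hm⟩ := hhalf (-lam) h
    refine ⟨-m - 1, ?_⟩
    push_cast
    linarith
  have hgen' : (LieSubalgebra.lieSpan ℂ (Matrix (Fin n) (Fin n) ℂ)
        ((adEig (-ξ) (-1) : Set (Matrix (Fin n) (Fin n) ℂ))
          ∪ (adEig (-ξ) 0 : Set (Matrix (Fin n) (Fin n) ℂ))
          ∪ (adEig (-ξ) 1 : Set (Matrix (Fin n) (Fin n) ℂ)))).toSubmodule = soC n := by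
    have h1 : adEig (-ξ) (-1) = adEig ξ 1 := by rw [adEig_neg]; norm_num
    have h0 : adEig (-ξ) 0 = adEig ξ 0 := by rw [adEig_neg]; norm_num
    have hm1 : adEig (-ξ) 1 = adEig ξ (-1) := by rw [adEig_neg]
    rw [h1, h0, hm1]
    rw [show ((adEig ξ 1 : Set (Matrix (Fin n) (Fin n) ℂ))
          ∪ (adEig ξ 0 : Set (Matrix (Fin n) (Fin n) ℂ))
          ∪ (adEig ξ (-1) : Set (Matrix (Fin n) (Fin n) ℂ)))
        = ((adEig ξ (-1) : Set (Matrix (Fin n) (Fin n) ℂ))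
          ∪ (adEig ξ 0 : Set (Matrix (Fin n) (Fin n) ℂ))
          ∪ (adEig ξ 1 : Set (Matrix (Fin n) (Fin n) ℂ))) from by
      rw [Set.union_assoc, Set.union_assoc]
      rw [Set.union_comm (adEig ξ 1 : Set (Matrix (Fin n) (Fin n) ℂ))]
      rw [Set.union_comm (adEig ξ 0 : Set (Matrix (Fin n) (Fin n) ℂ)), ← Set.union_assoc]]
    exact hgen
  constructor
  · exact main_half hn ξ hskew hhalf hgen
  · have h1 := main_half hn (-ξ) hskew' hhalf' hgen'
    rw [hespace (1/2)] at h1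
    exact h1
end

section
/- Let ξ ∈ so(n) have eigenvalues on ℂⁿ exactly ±i·j for 0 ≤ j ≤ k (all integers occurring, case (a)), or exactly ±i(j+1/2) for 0 ≤ j ≤ k with the eigenvalues ±i/2 having multiplicity at least 2 (case (b)). Then for every ℓ > 1, the (iℓ)-eigenspace g_ℓ of ad ξ on so(n,ℂ) satisfies g_ℓ = [g_1, g_{ℓ−1}]; consequently so(n,ℂ) is generated by g_{−1} ⊕ g_0 ⊕ g_1 and ξ is a canonical element. -/
open Matrix Complex Module

attribute [local instance 100] LieRing.ofAssociativeRing

/-- The span of all brackets `⁅x, y⁆` with `x ∈ p`, `y ∈ q`. -/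
def bracketSpan {K L : Type*} [Field K] [LieRing L] [LieAlgebra K L]
    (p q : Submodule K L) : Submodule K L :=
  Submodule.span K {z | ∃ x ∈ p, ∃ y ∈ q, ⁅x, y⁆ = z}

namespace CanonAux

variable {n : ℕ}

noncomputable def wedge (a b : Fin n → ℂ) : Matrix (Fin n) (Fin n) ℂ :=
  vecMulVec a b - vecMulVec b a

lemma wedge_transpose (a b : Fin n → ℂ) : (wedge a b)ᵀ = -(wedge a b) := by
  ext i j
  simp [wedge, vecMulVec_apply, mul_comm]

lemma vecMulVec_mul_vecMulVec (a b c d : Fin n → ℂ) :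
    vecMulVec a b * vecMulVec c d = (b ⬝ᵥ c) • vecMulVec a d := by
  ext i j
  simp [Matrix.mul_apply, vecMulVec_apply, dotProduct, Finset.mul_sum, Finset.sum_mul]
  congr 1; ext x; ring

lemma bracket_wedge (a b c d : Fin n → ℂ) :
    ⁅wedge a b, wedge c d⁆ = (b ⬝ᵥ c) • wedge a d - (b ⬝ᵥ d) • wedge a c
      - (a ⬝ᵥ c) • wedge b d + (a ⬝ᵥ d) • wedge b c := by
  simp only [Ring.lie_def, wedge, sub_mul, mul_sub, vecMulVec_mul_vecMulVec,
    smul_sub, dotProduct_comm]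
  abel

lemma mul_vecMulVec (M : Matrix (Fin n) (Fin n) ℂ) (a b : Fin n → ℂ) :
    M * vecMulVec a b = vecMulVec (M *ᵥ a) b := by
  ext i j
  simp [Matrix.mul_apply, vecMulVec_apply, mulVec, dotProduct, Finset.sum_mul, mul_assoc]

lemma vecMulVec_mul (M : Matrix (Fin n) (Fin n) ℂ) (a b : Fin n → ℂ) :
    vecMulVec a b * M = vecMulVec a (Mᵀ *ᵥ b) := by
  ext i j
  simp [Matrix.mul_apply, vecMulVec_apply, mulVec, dotProduct, Finset.mul_sum, mul_comm,
    mul_left_comm]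

section eig

variable {M : Matrix (Fin n) (Fin n) ℂ}

lemma ad_wedge (hM : Mᵀ = -M) {lam mu : ℝ} {a b : Fin n → ℂ} (ha : M *ᵥ a = ((lam : ℂ) * I) • a)
    (hb : M *ᵥ b = ((mu : ℂ) * I) • b) :
    ⁅M, wedge a b⁆ = (((lam + mu : ℝ) : ℂ) * I) • wedge a b := by
  simp only [Ring.lie_def, wedge, mul_sub, sub_mul, mul_vecMulVec, vecMulVec_mul, hM,
    Matrix.neg_mulVec, ha, hb]
  push_cast
  ext i j
  simp [vecMulVec_apply, Matrix.smul_apply, Pi.smul_apply, smul_eq_mul]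
  ring

lemma pairing_eq_zero (hM : Mᵀ = -M) {lam mu : ℝ} {a b : Fin n → ℂ}
    (ha : M *ᵥ a = ((lam : ℂ) * I) • a)
    (hb : M *ᵥ b = ((mu : ℂ) * I) • b) (h : lam + mu ≠ 0) : a ⬝ᵥ b = 0 := by
  have h1 : (M *ᵥ a) ⬝ᵥ b = a ⬝ᵥ (Mᵀ *ᵥ b) := by
    rw [Matrix.dotProduct_mulVec, Matrix.vecMul_transpose]
  rw [ha, hM, Matrix.neg_mulVec, hb] at h1
  simp only [smul_dotProduct, dotProduct_neg, dotProduct_smul,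
    smul_eq_mul] at h1
  have : ((lam : ℂ) + mu) * I * (a ⬝ᵥ b) = 0 := by ring_nf; ring_nf at h1; linear_combination h1
  have h2 : ((lam : ℂ) + mu) * I ≠ 0 := by
    simp [Complex.ext_iff]
    exact_mod_cast h
  rcases mul_eq_zero.1 this with h3 | h3
  · exact absurd h3 h2
  · exact h3

end eig

lemma star_mulVec_real (ξ : Matrix (Fin n) (Fin n) ℝ) (v : Fin n → ℂ) :
    (ξ.map (Complex.ofReal)) *ᵥ (star v) = star ((ξ.map (Complex.ofReal)) *ᵥ v) := by
  ext i
  simp only [mulVec, dotProduct, Pi.star_apply, Matrix.map_apply]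
  rw [star_sum]
  congr 1; ext x
  rw [star_mul']
  congr 1
  exact (Complex.conj_ofReal _).symm

lemma star_eigen {ξ : Matrix (Fin n) (Fin n) ℝ} {lam : ℝ} {v : Fin n → ℂ}
    (hv : (ξ.map (Complex.ofReal)) *ᵥ v = ((lam : ℂ) * I) • v) :
    (ξ.map (Complex.ofReal)) *ᵥ (star v) = (((-lam : ℝ) : ℂ) * I) • (star v) := by
  rw [star_mulVec_real, hv]
  ext i
  simp only [Pi.star_apply, Pi.smul_apply, smul_eq_mul, star_mul', Complex.star_def,
    Complex.conj_I, Complex.conj_ofReal]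
  push_cast
  ring

lemma dot_star_ne_zero {v : Fin n → ℂ} (hv : v ≠ 0) : v ⬝ᵥ star v ≠ 0 := by
  have : v ⬝ᵥ star v = ((∑ i, Complex.normSq (v i) : ℝ) : ℂ) := by
    push_cast
    simp [dotProduct, Complex.mul_conj]
  rw [this]
  norm_cast
  intro h
  apply hv
  ext i
  have := Finset.sum_eq_zero_iff_of_nonneg (fun i _ => Complex.normSq_nonneg (v i)) |>.1 h i
    (Finset.mem_univ i)
  simpa [Complex.normSq_eq_zero] using this

section main

variable {ξ : Matrix (Fin n) (Fin n) ℝ}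

lemma skewC (hskew : ξᵀ = -ξ) : (ξ.map (Complex.ofReal))ᵀ = -(ξ.map (Complex.ofReal)) := by
  ext i j
  simp only [Matrix.transpose_apply, Matrix.map_apply, Matrix.neg_apply]
  rw [show ξ j i = (-ξ) i j by rw [← hskew]; rfl]
  simp

lemma hermC (hskew : ξᵀ = -ξ) : (Complex.I • ξ.map (Complex.ofReal)).IsHermitian := by
  have h1 : (ξ.map (Complex.ofReal))ᴴ = (ξ.map (Complex.ofReal))ᵀ := by
    ext i j
    simp [Matrix.conjTranspose_apply, Matrix.map_apply, Complex.conj_ofReal]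
  unfold Matrix.IsHermitian
  rw [Matrix.conjTranspose_smul, h1, skewC hskew]
  simp [Complex.star_def, Complex.conj_I]

noncomputable def EE (ξ : Matrix (Fin n) (Fin n) ℝ) (r : ℝ) : Submodule ℂ (Fin n → ℂ) :=
  Module.End.eigenspace (Matrix.toLin' (ξ.map (Complex.ofReal))) ((r : ℂ) * Complex.I)

lemma mem_EE_iff {r : ℝ} {v : Fin n → ℂ} :
    v ∈ EE ξ r ↔ (ξ.map (Complex.ofReal)) *ᵥ v = ((r : ℂ) * I) • v := by
  rw [EE, Module.End.mem_eigenspace_iff, Matrix.toLin'_apply]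

lemma star_mem_EE {r : ℝ} {v : Fin n → ℂ} (hv : v ∈ EE ξ r) : star v ∈ EE ξ (-r) :=
  mem_EE_iff.2 (star_eigen (mem_EE_iff.1 hv))

lemma mem_iSup_EE (hskew : ξᵀ = -ξ) (x : Fin n → ℂ) : x ∈ ⨆ r : ℝ, EE ξ r := by
  classical
  have hherm := hermC hskew
  set b := hherm.eigenvectorBasis with hb
  have key : ∀ j, (⇑(b j) : Fin n → ℂ) ∈ ⨆ r : ℝ, EE ξ r := by
    intro j
    apply Submodule.mem_iSup_of_mem (-(hherm.eigenvalues j))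
    rw [mem_EE_iff]
    have h1 := hherm.mulVec_eigenvectorBasis j
    rw [Matrix.smul_mulVec, ← hb] at h1
    have h2 : (ξ.map (Complex.ofReal)) *ᵥ ⇑(b j) = (-I) • ((hherm.eigenvalues j : ℝ) • (⇑(b j) : Fin n → ℂ)) := by
      rw [← h1]
      ext i
      simp [Pi.smul_apply, smul_eq_mul]
      ring_nf
      simp [Complex.I_sq]
    rw [h2]
    ext i
    simp [Pi.smul_apply, smul_eq_mul, Complex.real_smul]
    ring
  have hsum : ∑ j, (b.repr ((WithLp.equiv 2 (Fin n → ℂ)).symm x) j) • (⇑(b j) : Fin n → ℂ) = x :=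
    by have := congrArg WithLp.ofLp (b.sum_repr ((WithLp.equiv 2 (Fin n → ℂ)).symm x)); simpa using this
  rw [← hsum]
  exact Submodule.sum_mem _ fun j _ => Submodule.smul_mem _ _ (key j)

lemma mem_adEig_iff {r : ℝ} {A : Matrix (Fin n) (Fin n) ℂ} :
    A ∈ adEig ξ r ↔ Aᵀ = -A ∧
      ⁅ξ.map (Complex.ofReal), A⁆ = ((r : ℂ) * I) • A := by
  rw [adEig, Submodule.mem_inf, Module.End.mem_eigenspace_iff, LieAlgebra.ad_apply]
  rfl

lemma wedge_mem_adEig (hskew : ξᵀ = -ξ) {lam mu r : ℝ} {a b : Fin n → ℂ}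
    (ha : a ∈ EE ξ lam) (hb : b ∈ EE ξ mu) (hr : lam + mu = r) :
    wedge a b ∈ adEig ξ r := by
  rw [mem_adEig_iff]
  refine ⟨wedge_transpose a b, ?_⟩
  have := ad_wedge (skewC hskew) (mem_EE_iff.1 ha) (mem_EE_iff.1 hb)
  rwa [hr] at this

/-- the span of wedges of eigenvectors with eigenvalue parameters summing to `r` -/
noncomputable def W (ξ : Matrix (Fin n) (Fin n) ℝ) (r : ℝ) :
    Submodule ℂ (Matrix (Fin n) (Fin n) ℂ) :=
  Submodule.span ℂ {A | ∃ lam mu : ℝ, lam + mu = r ∧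
    ∃ a ∈ EE ξ lam, ∃ b ∈ EE ξ mu, wedge a b = A}

lemma W_le_adEig (hskew : ξᵀ = -ξ) (r : ℝ) : W ξ r ≤ adEig ξ r := by
  rw [W, Submodule.span_le]
  rintro A ⟨lam, mu, hr, a, ha, b, hb, rfl⟩
  exact wedge_mem_adEig hskew ha hb hr

/-- vecMulVec as a linear map in the second argument -/
noncomputable def vmvR (a : Fin n → ℂ) : (Fin n → ℂ) →ₗ[ℂ] Matrix (Fin n) (Fin n) ℂ where
  toFun y := vecMulVec a y
  map_add' y z := by ext i j; simp [vecMulVec_apply, mul_add]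
  map_smul' c y := by ext i j; simp [vecMulVec_apply]; ring

/-- vecMulVec as a linear map in the first argument -/
noncomputable def vmvL (y : Fin n → ℂ) : (Fin n → ℂ) →ₗ[ℂ] Matrix (Fin n) (Fin n) ℂ where
  toFun x := vecMulVec x y
  map_add' x z := by ext i j; simp [vecMulVec_apply, add_mul]
  map_smul' c x := by ext i j; simp [vecMulVec_apply]; ring

/-- the set of rank-one products of eigenvectors -/
def RS (ξ : Matrix (Fin n) (Fin n) ℝ) : Set (Matrix (Fin n) (Fin n) ℂ) :=
  {A | ∃ lam mu : ℝ, ∃ a ∈ EE ξ lam, ∃ b ∈ EE ξ mu, vecMulVec a b = A}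

lemma aux_vmv_right (hskew : ξᵀ = -ξ) {lam : ℝ} {a : Fin n → ℂ} (ha : a ∈ EE ξ lam)
    (y : Fin n → ℂ) : vecMulVec a y ∈ Submodule.span ℂ (RS ξ) := by
  have hy := mem_iSup_EE hskew y
  have h1 : vecMulVec a y ∈ Submodule.map (vmvR a) (⨆ r : ℝ, EE ξ r) :=
    ⟨y, hy, rfl⟩
  rw [Submodule.map_iSup] at h1
  refine (iSup_le (fun mu => ?_) : (⨆ r : ℝ, Submodule.map (vmvR a) (EE ξ r)) ≤ _) h1
  rw [Submodule.map_le_iff_le_comap]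
  intro b hb
  exact Submodule.subset_span ⟨lam, mu, a, ha, b, hb, rfl⟩

lemma aux_vmv (hskew : ξᵀ = -ξ) (x y : Fin n → ℂ) :
    vecMulVec x y ∈ Submodule.span ℂ (RS ξ) := by
  have hx := mem_iSup_EE hskew x
  have h1 : vecMulVec x y ∈ Submodule.map (vmvL y) (⨆ r : ℝ, EE ξ r) :=
    ⟨x, hx, rfl⟩
  rw [Submodule.map_iSup] at h1
  refine (iSup_le (fun lam => ?_) : (⨆ r : ℝ, Submodule.map (vmvL y) (EE ξ r)) ≤ _) h1
  rw [Submodule.map_le_iff_le_comap]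
  intro a ha
  exact aux_vmv_right hskew ha y

lemma matrix_decomp (A : Matrix (Fin n) (Fin n) ℂ) :
    A = ∑ j, vecMulVec (fun i => A i j) (Pi.single j 1) := by
  ext i j'
  rw [Matrix.sum_apply]
  simp [vecMulVec_apply, Pi.single_apply]

lemma mem_span_RS (hskew : ξᵀ = -ξ) (A : Matrix (Fin n) (Fin n) ℂ) :
    A ∈ Submodule.span ℂ (RS ξ) := by
  rw [matrix_decomp A]
  exact Submodule.sum_mem _ fun j _ => aux_vmv hskew _ _

/-- the skew-symmetrization linear map -/
noncomputable def skw : Matrix (Fin n) (Fin n) ℂ →ₗ[ℂ] Matrix (Fin n) (Fin n) ℂ where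
  toFun A := (2 : ℂ)⁻¹ • (A - Aᵀ)
  map_add' A B := by
    simp only [Matrix.transpose_add, smul_sub, smul_add]
    abel
  map_smul' c A := by
    simp only [Matrix.transpose_smul, RingHom.id_apply, ← smul_sub, smul_comm c]

lemma soC_le_iSup_W (hskew : ξᵀ = -ξ) : soC n ≤ ⨆ r : ℝ, W ξ r := by
  intro A hA
  have hA' : Aᵀ = -A := hA
  have h0 : skw A = A := by
    simp only [skw, LinearMap.coe_mk, AddHom.coe_mk, hA', sub_neg_eq_add]
    rw [← two_smul ℂ A, smul_smul]
    norm_num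
  have h1 : skw A ∈ Submodule.map skw (Submodule.span ℂ (RS ξ)) :=
    ⟨A, mem_span_RS hskew A, rfl⟩
  rw [Submodule.map_span] at h1
  rw [← h0]
  refine Submodule.span_le.2 ?_ h1
  rintro B ⟨C, ⟨lam, mu, a, ha, b, hb, rfl⟩, rfl⟩
  have : skw (vecMulVec a b) = (2 : ℂ)⁻¹ • wedge a b := by
    simp only [skw, LinearMap.coe_mk, AddHom.coe_mk, wedge]
    congr 1
    ext i j
    simp [vecMulVec_apply, mul_comm]
  rw [this]
  refine Submodule.smul_mem _ _ ?_
  exact Submodule.mem_iSup_of_mem (lam + mu)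
    (Submodule.subset_span ⟨lam, mu, rfl, a, ha, b, hb, rfl⟩)

lemma extraction {Mod : Type*} [AddCommGroup Mod] [Module ℂ Mod] (f : Module.End ℂ Mod)
    (N : ℝ → Submodule ℂ Mod) (hN : ∀ s, N s ≤ f.eigenspace ((s : ℂ) * Complex.I))
    {r : ℝ} {x : Mod} (hx : x ∈ ⨆ s : ℝ, N s) (hxe : x ∈ f.eigenspace ((r : ℂ) * Complex.I)) :
    x ∈ N r := by
  have hsplit : (⨆ s : ℝ, N s) ≤ N r ⊔ ⨆ s : ℝ, ⨆ _ : s ≠ r, N s := by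
    refine iSup_le fun s => ?_
    by_cases h : s = r
    · subst h; exact le_sup_left
    · exact le_sup_of_le_right (le_iSup_of_le s (le_iSup_of_le h le_rfl))
  rcases Submodule.mem_sup.1 (hsplit hx) with ⟨y, hy, z, hz, hyz⟩
  have hz3 : z ∈ ⨆ μ : ℂ, ⨆ _ : μ ≠ (r : ℂ) * Complex.I, f.eigenspace μ := by
    refine (iSup_le fun s => iSup_le fun hs => ?_ : (⨆ s : ℝ, ⨆ _ : s ≠ r, N s) ≤ _) hz
    refine le_trans (hN s) (le_iSup_of_le ((s : ℂ) * Complex.I) (le_iSup_of_le ?_ le_rfl))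
    intro h
    apply hs
    have := mul_right_cancel₀ Complex.I_ne_zero h
    exact_mod_cast this
  have hdisj := Module.End.eigenspaces_iSupIndep f ((r : ℂ) * Complex.I)
  have hze : z ∈ f.eigenspace ((r : ℂ) * Complex.I) := by
    have hzz : z = x - y := by rw [← hyz]; abel
    rw [hzz]
    exact Submodule.sub_mem _ hxe (hN r hy)
  have hz0 : z = 0 := Submodule.disjoint_def.1 hdisj z hze hz3
  rw [← hyz, hz0, add_zero]
  exact hy

lemma adEig_le_W (hskew : ξᵀ = -ξ) (r : ℝ) : adEig ξ r ≤ W ξ r := by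
  intro A hA
  rcases Submodule.mem_inf.1 hA with ⟨hA1, hA2⟩
  exact extraction _ (W ξ) (fun s => fun B hB => (Submodule.mem_inf.1 (W_le_adEig hskew s hB)).2)
    (soC_le_iSup_W hskew hA1) hA2

lemma wedge_zero (a : Fin n → ℂ) : wedge a 0 = 0 := by
  ext i j; simp [wedge, vecMulVec_apply]

lemma zero_wedge (b : Fin n → ℂ) : wedge 0 b = 0 := by
  ext i j; simp [wedge, vecMulVec_apply]

lemma neg_wedge (a b : Fin n → ℂ) : wedge b a = -wedge a b := by
  ext i j; simp [wedge, vecMulVec_apply]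

lemma dot_star_comm_zero {x y : Fin n → ℂ} (h : (star x) ⬝ᵥ y = 0) : x ⬝ᵥ star y = 0 := by
  have : x ⬝ᵥ star y = star (y ⬝ᵥ star x) := by
    simp [dotProduct, star_sum, mul_comm]
  rw [this, show y ⬝ᵥ star x = (star x) ⬝ᵥ y from dotProduct_comm _ _, h, star_zero]

lemma wedge_mem_bracketSpan_of (hskew : ξᵀ = -ξ) {l lam mu : ℝ} {a b u z : Fin n → ℂ}
    (ha : a ∈ EE ξ lam) (hb : b ∈ EE ξ mu) (hu : u ∈ EE ξ (lam - 1)) (hz : z ∈ EE ξ (1 - lam))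
    (hl : lam + mu = l)
    (hzu : z ⬝ᵥ u = 1) (hzb : z ⬝ᵥ b = 0) (hau : a ⬝ᵥ u = 0) (hab : a ⬝ᵥ b = 0) :
    wedge a b ∈ bracketSpan (adEig ξ 1) (adEig ξ (l - 1)) := by
  have hx : wedge a z ∈ adEig ξ 1 := wedge_mem_adEig hskew ha hz (by ring)
  have hy : wedge u b ∈ adEig ξ (l - 1) := wedge_mem_adEig hskew hu hb (by rw [← hl]; ring)
  have hbr : ⁅wedge a z, wedge u b⁆ = wedge a b := by
    rw [bracket_wedge, hzu, hzb, hau, hab]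
    simp
  exact Submodule.subset_span ⟨_, hx, _, hy, hbr⟩

/-- generic decrement step -/
lemma wedge_mem_generic (hskew : ξᵀ = -ξ) {l lam mu : ℝ} {a b : Fin n → ℂ}
    (ha : a ∈ EE ξ lam) (hb : b ∈ EE ξ mu) (hl : lam + mu = l)
    (hEn : EE ξ (lam - 1) ≠ ⊥)
    (h1 : 2 * lam - 1 ≠ 0) (h2 : l + 1 - 2 * lam ≠ 0) (h3 : l ≠ 0) :
    wedge a b ∈ bracketSpan (adEig ξ 1) (adEig ξ (l - 1)) := by
  rcases Submodule.exists_mem_ne_zero_of_ne_bot hEn with ⟨u0, hu0, hu0ne⟩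
  have hstar : star u0 ∈ EE ξ (1 - lam) := by
    have := star_mem_EE hu0
    rwa [show -(lam - 1) = 1 - lam by ring] at this
  set c := u0 ⬝ᵥ star u0 with hc
  have hcne : c ≠ 0 := dot_star_ne_zero hu0ne
  set z := c⁻¹ • star u0 with hzdef
  have hz : z ∈ EE ξ (1 - lam) := Submodule.smul_mem _ _ hstar
  refine wedge_mem_bracketSpan_of hskew ha hb hu0 hz hl ?_ ?_ ?_ ?_
  · rw [hzdef, smul_dotProduct, dotProduct_comm, ← hc, smul_eq_mul, inv_mul_cancel₀ hcne]
  · rw [hzdef, smul_dotProduct, pairing_eq_zero (skewC hskew) (mem_EE_iff.1 hstar)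
      (mem_EE_iff.1 hb) (by intro hcon; apply h2; linarith), smul_zero]
  · exact pairing_eq_zero (skewC hskew) (mem_EE_iff.1 ha) (mem_EE_iff.1 hu0)
      (by intro hcon; apply h1; linarith)
  · exact pairing_eq_zero (skewC hskew) (mem_EE_iff.1 ha) (mem_EE_iff.1 hb)
      (by rw [hl]; exact h3)

/-- find a nonzero vector in `EE ξ (1/2)` orthogonal (w.r.t. hermitian pairing) to `b` -/
lemma exists_orth (hdim : 2 ≤ Module.finrank ℂ (EE ξ (1/2 : ℝ))) (b : Fin n → ℂ) :
    ∃ c, c ∈ EE ξ (1/2 : ℝ) ∧ c ≠ 0 ∧ (star b) ⬝ᵥ c = 0 := by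
  classical
  set V := EE ξ (1/2 : ℝ)
  let φ : V →ₗ[ℂ] ℂ :=
    { toFun := fun x => (star b) ⬝ᵥ (x : Fin n → ℂ)
      map_add' := fun x y => by simp [dotProduct_add]
      map_smul' := fun c x => by simp [dotProduct_smul] }
  have hker : 0 < Module.finrank ℂ (LinearMap.ker φ) := by
    have h1 := LinearMap.finrank_range_add_finrank_ker φ
    have h2 : Module.finrank ℂ (LinearMap.range φ) ≤ 1 := by
      simpa using Submodule.finrank_le (LinearMap.range φ)
    omega
  have : Nontrivial (LinearMap.ker φ) := Module.nontrivial_of_finrank_pos hker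
  obtain ⟨x, hxne⟩ := exists_ne (0 : LinearMap.ker φ)
  refine ⟨((x : V) : Fin n → ℂ), (x : V).2, ?_, ?_⟩
  · intro h
    apply hxne
    ext
    exact congrFun h _
  · exact x.2

/-- the special multiplicity-two case: `a ∈ V_{1/2}`, `b ∈ V_{3/2}`, `ℓ = 2`. -/
lemma wedge_mem_special (hskew : ξᵀ = -ξ)
    (hdim : 2 ≤ Module.finrank ℂ (EE ξ (1/2 : ℝ)))
    {a b : Fin n → ℂ} (ha : a ∈ EE ξ (1/2 : ℝ)) (hb : b ∈ EE ξ (3/2 : ℝ)) :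
    wedge a b ∈ bracketSpan (adEig ξ 1) (adEig ξ 1) := by
  obtain ⟨c, hc, hcne, hbc⟩ := exists_orth hdim a
  have hu : star c ∈ EE ξ (-(1/2) : ℝ) := star_mem_EE hc
  set d := c ⬝ᵥ star c with hd
  have hdne : d ≠ 0 := dot_star_ne_zero hcne
  set z := d⁻¹ • c with hzdef
  have hz : z ∈ EE ξ (1/2 : ℝ) := Submodule.smul_mem _ _ hc
  have hx : wedge a z ∈ adEig ξ 1 := wedge_mem_adEig hskew ha hz (by norm_num)
  have hy : wedge (star c) b ∈ adEig ξ 1 := wedge_mem_adEig hskew hu hb (by norm_num)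
  have hbr : ⁅wedge a z, wedge (star c) b⁆ = wedge a b := by
    rw [bracket_wedge]
    have e1 : z ⬝ᵥ star c = 1 := by
      rw [hzdef, smul_dotProduct, ← hd, smul_eq_mul, inv_mul_cancel₀ hdne]
    have e2 : z ⬝ᵥ b = 0 := by
      rw [hzdef, smul_dotProduct, pairing_eq_zero (skewC hskew) (mem_EE_iff.1 hc)
        (mem_EE_iff.1 hb) (by norm_num), smul_zero]
    have e3 : a ⬝ᵥ star c = 0 := dot_star_comm_zero hbc
    have e4 : a ⬝ᵥ b = 0 := pairing_eq_zero (skewC hskew) (mem_EE_iff.1 ha)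
      (mem_EE_iff.1 hb) (by norm_num)
    rw [e1, e2, e3, e4]
    simp
  exact Submodule.subset_span ⟨_, hx, _, hy, hbr⟩

lemma EE_ne_bot_of_mem {lam : ℝ} {a : Fin n → ℂ} (ha : a ∈ EE ξ lam) (ha0 : a ≠ 0) :
    EE ξ lam ≠ ⊥ := by
  intro h
  rw [h, Submodule.mem_bot] at ha
  exact ha0 ha

lemma hasEig_iff {r : ℝ} :
    Module.End.HasEigenvalue (Matrix.toLin' (ξ.map (Complex.ofReal))) ((r : ℝ) * Complex.I)
      ↔ EE ξ r ≠ ⊥ := Iff.rfl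

lemma wedge_mem_main_a (hskew : ξᵀ = -ξ) {k : ℕ}
    (hspec : ∀ lam : ℝ,
      Module.End.HasEigenvalue (Matrix.toLin' (ξ.map (Complex.ofReal)))
          (lam * Complex.I) ↔ ∃ j : ℤ, |j| ≤ (k : ℤ) ∧ lam = (j : ℝ))
    {l : ℤ} (hl : 2 ≤ l) {lam mu : ℝ} {a b : Fin n → ℂ}
    (ha : a ∈ EE ξ lam) (hb : b ∈ EE ξ mu) (hs : lam + mu = (l : ℝ)) :
    wedge a b ∈ bracketSpan (adEig ξ 1) (adEig ξ ((l : ℝ) - 1)) := by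
  by_cases ha0 : a = 0
  · rw [ha0, zero_wedge]; exact Submodule.zero_mem _
  by_cases hb0 : b = 0
  · rw [hb0, wedge_zero]; exact Submodule.zero_mem _
  obtain ⟨j1, hj1k, hj1⟩ := (hspec lam).1 (hasEig_iff.2 (EE_ne_bot_of_mem ha ha0))
  obtain ⟨j2, hj2k, hj2⟩ := (hspec mu).1 (hasEig_iff.2 (EE_ne_bot_of_mem hb hb0))
  subst hj1 hj2
  have hsum : j1 + j2 = l := by exact_mod_cast hs
  rw [abs_le] at hj1k hj2k
  have hl0 : ((l : ℝ)) ≠ 0 := by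
    intro h; have : l = 0 := by exact_mod_cast h
    omega
  by_cases hcoll : 2 * j1 = l + 1
  · -- decrement on mu instead
    rw [neg_wedge b a]
    refine Submodule.neg_mem _ ?_
    refine wedge_mem_generic hskew hb ha (by rw [← hs]; ring) ?_ ?_ ?_ hl0
    · rw [show ((j2 : ℝ)) - 1 = ((j2 - 1 : ℤ) : ℝ) by push_cast; ring]
      refine hasEig_iff.1 ((hspec _).2 ⟨j2 - 1, ?_, rfl⟩)
      rw [abs_le]; omega
    · intro h
      have : 2 * j2 - 1 = 0 := by exact_mod_cast h
      omega
    · intro h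
      have : l + 1 - 2 * j2 = 0 := by exact_mod_cast h
      omega
  · refine wedge_mem_generic hskew ha hb hs ?_ ?_ ?_ hl0
    · rw [show ((j1 : ℝ)) - 1 = ((j1 - 1 : ℤ) : ℝ) by push_cast; ring]
      refine hasEig_iff.1 ((hspec _).2 ⟨j1 - 1, ?_, rfl⟩)
      rw [abs_le]; omega
    · intro h
      have : 2 * j1 - 1 = 0 := by exact_mod_cast h
      omega
    · intro h
      have : l + 1 - 2 * j1 = 0 := by exact_mod_cast h
      omega

lemma wedge_mem_main_b (hskew : ξᵀ = -ξ) {k : ℕ}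
    (hspec : ∀ lam : ℝ,
      Module.End.HasEigenvalue (Matrix.toLin' (ξ.map (Complex.ofReal)))
          (lam * Complex.I) ↔
        ∃ j : ℤ, -(k : ℤ) - 1 ≤ j ∧ j ≤ (k : ℤ) ∧ lam = (j : ℝ) + 1 / 2)
    (hdim : 2 ≤ Module.finrank ℂ (EE ξ (1/2 : ℝ)))
    {l : ℤ} (hl : 2 ≤ l) {lam mu : ℝ} {a b : Fin n → ℂ}
    (ha : a ∈ EE ξ lam) (hb : b ∈ EE ξ mu) (hs : lam + mu = (l : ℝ)) :
    wedge a b ∈ bracketSpan (adEig ξ 1) (adEig ξ ((l : ℝ) - 1)) := by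
  by_cases ha0 : a = 0
  · rw [ha0, zero_wedge]; exact Submodule.zero_mem _
  by_cases hb0 : b = 0
  · rw [hb0, wedge_zero]; exact Submodule.zero_mem _
  obtain ⟨j1, hj1l, hj1u, hj1⟩ := (hspec lam).1 (hasEig_iff.2 (EE_ne_bot_of_mem ha ha0))
  obtain ⟨j2, hj2l, hj2u, hj2⟩ := (hspec mu).1 (hasEig_iff.2 (EE_ne_bot_of_mem hb hb0))
  subst hj1 hj2
  have hsum : j1 + j2 + 1 = l := by
    have : ((j1 + j2 + 1 : ℤ) : ℝ) = ((l : ℤ) : ℝ) := by push_cast; push_cast at hs; linarith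
    exact_mod_cast this
  have hl0 : ((l : ℝ)) ≠ 0 := by
    intro h; have : l = 0 := by exact_mod_cast h
    omega
  by_cases hc1 : j1 ≠ 0 ∧ 2 * j1 ≠ l
  · refine wedge_mem_generic hskew ha hb hs ?_ ?_ ?_ hl0
    · rw [show ((j1 : ℝ)) + 1/2 - 1 = ((j1 - 1 : ℤ) : ℝ) + 1/2 by push_cast; ring]
      exact hasEig_iff.1 ((hspec _).2 ⟨j1 - 1, by omega, by omega, rfl⟩)
    · intro h
      have : 2 * j1 = 0 := by
        have : ((2 * j1 : ℤ) : ℝ) = 0 := by push_cast; linarith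
        exact_mod_cast this
      omega
    · intro h
      have : 2 * j1 = l := by
        have : ((2 * j1 : ℤ) : ℝ) = ((l : ℤ) : ℝ) := by push_cast; linarith
        exact_mod_cast this
      exact hc1.2 this
  by_cases hc2 : j2 ≠ 0 ∧ 2 * j2 ≠ l
  · rw [neg_wedge b a]
    refine Submodule.neg_mem _ ?_
    refine wedge_mem_generic hskew hb ha (by rw [← hs]; ring) ?_ ?_ ?_ hl0
    · rw [show ((j2 : ℝ)) + 1/2 - 1 = ((j2 - 1 : ℤ) : ℝ) + 1/2 by push_cast; ring]
      exact hasEig_iff.1 ((hspec _).2 ⟨j2 - 1, by omega, by omega, rfl⟩)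
    · intro h
      have : 2 * j2 = 0 := by
        have : ((2 * j2 : ℤ) : ℝ) = 0 := by push_cast; linarith
        exact_mod_cast this
      omega
    · intro h
      have : 2 * j2 = l := by
        have : ((2 * j2 : ℤ) : ℝ) = ((l : ℤ) : ℝ) := by push_cast; linarith
        exact_mod_cast this
      exact hc2.2 this
  -- special case: l = 2 and {lam, mu} = {1/2, 3/2}
  have hcases : (j1 = 0 ∧ j2 = 1 ∧ l = 2) ∨ (j1 = 1 ∧ j2 = 0 ∧ l = 2) := by
    push_neg at hc1 hc2
    by_cases h10 : j1 = 0
    · subst h10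
      have := hc2 (by omega)
      omega
    · have h2l : 2 * j1 = l := hc1 h10
      by_cases h20 : j2 = 0
      · omega
      · have := hc2 h20
        omega
  have hll : ((l : ℝ)) - 1 = 1 := by
    rcases hcases with ⟨_, _, rfl⟩ | ⟨_, _, rfl⟩ <;> norm_num
  rw [hll]
  rcases hcases with ⟨h1, h2, h3⟩ | ⟨h1, h2, h3⟩
  · subst h1 h2
    have ha' : a ∈ EE ξ (1/2 : ℝ) := by
      rwa [show ((0 : ℤ) : ℝ) + 1/2 = (1/2 : ℝ) by norm_num] at ha
    have hb' : b ∈ EE ξ (3/2 : ℝ) := by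
      rwa [show ((1 : ℤ) : ℝ) + 1/2 = (3/2 : ℝ) by norm_num] at hb
    exact wedge_mem_special hskew hdim ha' hb'
  · subst h1 h2
    have ha' : a ∈ EE ξ (3/2 : ℝ) := by
      rwa [show ((1 : ℤ) : ℝ) + 1/2 = (3/2 : ℝ) by norm_num] at ha
    have hb' : b ∈ EE ξ (1/2 : ℝ) := by
      rwa [show ((0 : ℤ) : ℝ) + 1/2 = (1/2 : ℝ) by norm_num] at hb
    rw [neg_wedge b a]
    exact Submodule.neg_mem _ (wedge_mem_special hskew hdim hb' ha')

lemma bracket_mem_adEig (hskew : ξᵀ = -ξ) {r s : ℝ} {x y : Matrix (Fin n) (Fin n) ℂ}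
    (hx : x ∈ adEig ξ r) (hy : y ∈ adEig ξ s) : ⁅x, y⁆ ∈ adEig ξ (r + s) := by
  rw [mem_adEig_iff] at hx hy ⊢
  obtain ⟨hx1, hx2⟩ := hx
  obtain ⟨hy1, hy2⟩ := hy
  constructor
  · show (x * y - y * x)ᵀ = -(x * y - y * x)
    rw [Matrix.transpose_sub, Matrix.transpose_mul, Matrix.transpose_mul, hx1, hy1]
    simp [Matrix.neg_mul, Matrix.mul_neg]
  · have hleib : ⁅ξ.map (Complex.ofReal), ⁅x, y⁆⁆
        = ⁅⁅ξ.map (Complex.ofReal), x⁆, y⁆ + ⁅x, ⁅ξ.map (Complex.ofReal), y⁆⁆ :=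
      leibniz_lie _ _ _
    rw [hx2, hy2, smul_lie, lie_smul, ← add_smul] at hleib
    rw [hleib]
    congr 1
    push_cast
    ring

lemma part1 (hskew : ξᵀ = -ξ)
    (hcase :
      (∃ k : ℕ, ∀ lam : ℝ,
        Module.End.HasEigenvalue (Matrix.toLin' (ξ.map (Complex.ofReal)))
            (lam * Complex.I) ↔ ∃ j : ℤ, |j| ≤ (k : ℤ) ∧ lam = (j : ℝ)) ∨
      (∃ k : ℕ, (∀ lam : ℝ,
        Module.End.HasEigenvalue (Matrix.toLin' (ξ.map (Complex.ofReal)))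
            (lam * Complex.I) ↔
          ∃ j : ℤ, -(k : ℤ) - 1 ≤ j ∧ j ≤ (k : ℤ) ∧ lam = (j : ℝ) + 1 / 2) ∧
        2 ≤ Module.finrank ℂ (Module.End.eigenspace
          (Matrix.toLin' (ξ.map (Complex.ofReal))) ((1 / 2 : ℝ) * Complex.I)))) :
    ∀ l : ℤ, 1 < l →
      adEig ξ (l : ℝ) = bracketSpan (adEig ξ 1) (adEig ξ ((l : ℝ) - 1)) := by
  intro l hl
  apply le_antisymm
  · intro A hA
    have hAW := adEig_le_W hskew (l : ℝ) hA
    refine Submodule.span_le.2 ?_ hAW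
    rintro B ⟨lam, mu, hr, a, haE, b, hbE, rfl⟩
    rcases hcase with ⟨k, hspec⟩ | ⟨k, hspec, hdim⟩
    · exact wedge_mem_main_a hskew hspec (by omega) haE hbE hr
    · exact wedge_mem_main_b hskew hspec hdim (by omega) haE hbE hr
  · refine Submodule.span_le.2 ?_
    rintro B ⟨x, hx, y, hy, rfl⟩
    have hbr := bracket_mem_adEig hskew hx hy
    rwa [show (1 : ℝ) + ((l : ℝ) - 1) = (l : ℝ) by ring] at hbr

/-- entrywise complex conjugation of a matrix -/
noncomputable def cM (A : Matrix (Fin n) (Fin n) ℂ) : Matrix (Fin n) (Fin n) ℂ :=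
  A.map (starRingEnd ℂ)

lemma cM_cM (A : Matrix (Fin n) (Fin n) ℂ) : cM (cM A) = A := by
  ext i j; simp [cM]

lemma cM_mul (A B : Matrix (Fin n) (Fin n) ℂ) : cM (A * B) = cM A * cM B := by
  ext i j
  simp [cM, Matrix.mul_apply, Matrix.map_apply, map_sum]

lemma cM_add (A B : Matrix (Fin n) (Fin n) ℂ) : cM (A + B) = cM A + cM B := by
  ext i j; simp [cM]

lemma cM_sub (A B : Matrix (Fin n) (Fin n) ℂ) : cM (A - B) = cM A - cM B := by
  ext i j; simp [cM]

lemma cM_smul (c : ℂ) (A : Matrix (Fin n) (Fin n) ℂ) :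
    cM (c • A) = (starRingEnd ℂ c) • cM A := by
  ext i j; simp [cM]

lemma cM_lie (A B : Matrix (Fin n) (Fin n) ℂ) : cM ⁅A, B⁆ = ⁅cM A, cM B⁆ := by
  show cM (A * B - B * A) = cM A * cM B - cM B * cM A
  rw [cM_sub, cM_mul, cM_mul]

lemma cM_real (ξ : Matrix (Fin n) (Fin n) ℝ) : cM (ξ.map (Complex.ofReal)) = ξ.map (Complex.ofReal) := by
  ext i j; simp [cM, Matrix.map_apply, Complex.conj_ofReal]

lemma cM_transpose (A : Matrix (Fin n) (Fin n) ℂ) : (cM A)ᵀ = cM Aᵀ := by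
  ext i j; simp [cM, Matrix.map_apply]

lemma cM_neg (A : Matrix (Fin n) (Fin n) ℂ) : cM (-A) = -(cM A) := by
  ext i j; simp [cM]

lemma cM_mem_adEig {r : ℝ} {A : Matrix (Fin n) (Fin n) ℂ} (hA : A ∈ adEig ξ r) :
    cM A ∈ adEig ξ (-r) := by
  rw [mem_adEig_iff] at hA ⊢
  obtain ⟨h1, h2⟩ := hA
  constructor
  · rw [cM_transpose, h1, cM_neg]
  · have := congrArg cM h2
    rw [cM_lie, cM_real, cM_smul] at this
    rw [this]
    congr 1
    simp [Complex.ext_iff]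

/-- skew matrices form a Lie subalgebra -/
noncomputable def soCLie (n : ℕ) : LieSubalgebra ℂ (Matrix (Fin n) (Fin n) ℂ) :=
  { soC n with
    lie_mem' := by
      intro x y hx hy
      have hx' : xᵀ = -x := hx
      have hy' : yᵀ = -y := hy
      show (x * y - y * x)ᵀ = -(x * y - y * x)
      rw [Matrix.transpose_sub, Matrix.transpose_mul, Matrix.transpose_mul, hx', hy']
      simp [Matrix.neg_mul, Matrix.mul_neg] }

/-- the generating set for the Lie span -/
abbrev genSet (ξ : Matrix (Fin n) (Fin n) ℝ) : Set (Matrix (Fin n) (Fin n) ℂ) :=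
  (adEig ξ (-1) : Set (Matrix (Fin n) (Fin n) ℂ))
    ∪ (adEig ξ 0 : Set (Matrix (Fin n) (Fin n) ℂ))
    ∪ (adEig ξ 1 : Set (Matrix (Fin n) (Fin n) ℂ))

lemma cM_mem_lieSpan {A : Matrix (Fin n) (Fin n) ℂ}
    (hA : A ∈ LieSubalgebra.lieSpan ℂ (Matrix (Fin n) (Fin n) ℂ) (genSet ξ)) :
    cM A ∈ LieSubalgebra.lieSpan ℂ (Matrix (Fin n) (Fin n) ℂ) (genSet ξ) := by
  set L := LieSubalgebra.lieSpan ℂ (Matrix (Fin n) (Fin n) ℂ) (genSet ξ) with hLdef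
  let K : LieSubalgebra ℂ (Matrix (Fin n) (Fin n) ℂ) :=
    { carrier := {B | cM B ∈ L}
      add_mem' := by
        intro B C hB hC
        simp only [Set.mem_setOf_eq] at *
        rw [cM_add]
        exact add_mem hB hC
      zero_mem' := by
        simp only [Set.mem_setOf_eq]
        have : cM (0 : Matrix (Fin n) (Fin n) ℂ) = 0 := by ext i j; simp [cM]
        rw [this]; exact zero_mem _
      smul_mem' := by
        intro c B hB
        simp only [Set.mem_setOf_eq] at *
        rw [cM_smul]
        exact Submodule.smul_mem _ _ hB
      lie_mem' := by
        intro B C hB hC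
        simp only [Set.mem_setOf_eq] at *
        rw [cM_lie]
        exact LieSubalgebra.lie_mem _ hB hC }
  have hle : L ≤ K := by
    rw [hLdef]
    apply (LieSubalgebra.lieSpan_le).2
    rintro B ((hB | hB) | hB)
    · show cM B ∈ L
      have := cM_mem_adEig hB
      rw [show -(-1 : ℝ) = 1 by norm_num] at this
      exact LieSubalgebra.subset_lieSpan (Or.inr this)
    · show cM B ∈ L
      have := cM_mem_adEig hB
      rw [show -(0 : ℝ) = 0 by norm_num] at this
      exact LieSubalgebra.subset_lieSpan (Or.inl (Or.inr this))
    · show cM B ∈ L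
      have := cM_mem_adEig hB
      exact LieSubalgebra.subset_lieSpan (Or.inl (Or.inl this))
  exact hle hA

lemma adEig_int_le_lieSpan (hskew : ξᵀ = -ξ)
    (hcase :
      (∃ k : ℕ, ∀ lam : ℝ,
        Module.End.HasEigenvalue (Matrix.toLin' (ξ.map (Complex.ofReal)))
            (lam * Complex.I) ↔ ∃ j : ℤ, |j| ≤ (k : ℤ) ∧ lam = (j : ℝ)) ∨
      (∃ k : ℕ, (∀ lam : ℝ,
        Module.End.HasEigenvalue (Matrix.toLin' (ξ.map (Complex.ofReal)))
            (lam * Complex.I) ↔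
          ∃ j : ℤ, -(k : ℤ) - 1 ≤ j ∧ j ≤ (k : ℤ) ∧ lam = (j : ℝ) + 1 / 2) ∧
        2 ≤ Module.finrank ℂ (Module.End.eigenspace
          (Matrix.toLin' (ξ.map (Complex.ofReal))) ((1 / 2 : ℝ) * Complex.I)))) :
    ∀ N : ℕ, ∀ m : ℤ, m.natAbs ≤ N →
      adEig ξ (m : ℝ) ≤
        (LieSubalgebra.lieSpan ℂ (Matrix (Fin n) (Fin n) ℂ) (genSet ξ)).toSubmodule := by
  intro N
  induction N with
  | zero =>
    intro m hm
    have hm0 : m = 0 := by omega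
    subst hm0
    intro A hA
    rw [show ((0 : ℤ) : ℝ) = 0 from Int.cast_zero] at hA
    exact LieSubalgebra.subset_lieSpan (Or.inl (Or.inr hA))
  | succ N ih =>
    intro m hm
    by_cases hsmall : m.natAbs ≤ N
    · exact ih m hsmall
    have hNA : m.natAbs = N + 1 := by omega
    by_cases hN0 : N = 0
    · subst hN0
      have : m = 1 ∨ m = -1 := by omega
      rcases this with rfl | rfl
      · intro A hA
        rw [show ((1 : ℤ) : ℝ) = 1 from Int.cast_one] at hA
        exact LieSubalgebra.subset_lieSpan (Or.inr hA)
      · intro A hA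
        rw [show ((-1 : ℤ) : ℝ) = -1 by push_cast; ring] at hA
        exact LieSubalgebra.subset_lieSpan (Or.inl (Or.inl hA))
    have hpos : ∀ p : ℤ, p.natAbs ≤ N + 1 → 2 ≤ p →
        adEig ξ (p : ℝ) ≤
          (LieSubalgebra.lieSpan ℂ (Matrix (Fin n) (Fin n) ℂ) (genSet ξ)).toSubmodule := by
      intro p hp hp2
      rw [part1 hskew hcase p (by omega)]
      refine Submodule.span_le.2 ?_
      rintro B ⟨x, hx, y, hy, rfl⟩
      have hxL : x ∈ LieSubalgebra.lieSpan ℂ (Matrix (Fin n) (Fin n) ℂ) (genSet ξ) :=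
        LieSubalgebra.subset_lieSpan (Or.inr hx)
      have hyL : y ∈ LieSubalgebra.lieSpan ℂ (Matrix (Fin n) (Fin n) ℂ) (genSet ξ) := by
        rw [show ((p : ℝ) - 1) = ((p - 1 : ℤ) : ℝ) by push_cast; ring] at hy
        exact ih (p - 1) (by omega) hy
      exact LieSubalgebra.lie_mem _ hxL hyL
    rcases le_or_gt 2 m with h2 | h2
    · exact hpos m (by omega) h2
    · have hneg : m ≤ -2 := by omega
      intro A hA
      have h1 := cM_mem_adEig hA
      rw [show -((m : ℤ) : ℝ) = ((-m : ℤ) : ℝ) by push_cast; ring] at h1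
      have h2' : cM A ∈ (LieSubalgebra.lieSpan ℂ (Matrix (Fin n) (Fin n) ℂ)
          (genSet ξ)).toSubmodule := hpos (-m) (by omega) (by omega) h1
      have := cM_mem_lieSpan h2'
      rwa [cM_cM] at this

lemma soC_le_lieSpan (hskew : ξᵀ = -ξ)
    (hcase :
      (∃ k : ℕ, ∀ lam : ℝ,
        Module.End.HasEigenvalue (Matrix.toLin' (ξ.map (Complex.ofReal)))
            (lam * Complex.I) ↔ ∃ j : ℤ, |j| ≤ (k : ℤ) ∧ lam = (j : ℝ)) ∨
      (∃ k : ℕ, (∀ lam : ℝ,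
        Module.End.HasEigenvalue (Matrix.toLin' (ξ.map (Complex.ofReal)))
            (lam * Complex.I) ↔
          ∃ j : ℤ, -(k : ℤ) - 1 ≤ j ∧ j ≤ (k : ℤ) ∧ lam = (j : ℝ) + 1 / 2) ∧
        2 ≤ Module.finrank ℂ (Module.End.eigenspace
          (Matrix.toLin' (ξ.map (Complex.ofReal))) ((1 / 2 : ℝ) * Complex.I)))) :
    soC n ≤
      (LieSubalgebra.lieSpan ℂ (Matrix (Fin n) (Fin n) ℂ) (genSet ξ)).toSubmodule := by
  intro A hA
  have hAW := soC_le_iSup_W hskew hA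
  refine (iSup_le fun r => ?_ : (⨆ r : ℝ, W ξ r) ≤ _) hAW
  refine Submodule.span_le.2 ?_
  rintro B ⟨lam, mu, hr, a, haE, b, hbE, rfl⟩
  by_cases ha0 : a = 0
  · rw [ha0, zero_wedge]
    exact Submodule.zero_mem _
  by_cases hb0 : b = 0
  · rw [hb0, wedge_zero]
    exact Submodule.zero_mem _
  have hm : ∃ m : ℤ, lam + mu = (m : ℝ) := by
    rcases hcase with ⟨k, hspec⟩ | ⟨k, hspec, hdim⟩
    · obtain ⟨j1, _, hj1⟩ := (hspec lam).1 (hasEig_iff.2 (EE_ne_bot_of_mem haE ha0))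
      obtain ⟨j2, _, hj2⟩ := (hspec mu).1 (hasEig_iff.2 (EE_ne_bot_of_mem hbE hb0))
      exact ⟨j1 + j2, by rw [hj1, hj2]; push_cast; ring⟩
    · obtain ⟨j1, _, _, hj1⟩ := (hspec lam).1 (hasEig_iff.2 (EE_ne_bot_of_mem haE ha0))
      obtain ⟨j2, _, _, hj2⟩ := (hspec mu).1 (hasEig_iff.2 (EE_ne_bot_of_mem hbE hb0))
      exact ⟨j1 + j2 + 1, by rw [hj1, hj2]; push_cast; ring⟩
  obtain ⟨m, hmr⟩ := hm
  have hmem : wedge a b ∈ adEig ξ (m : ℝ) :=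
    wedge_mem_adEig hskew haE hbE hmr
  exact adEig_int_le_lieSpan hskew hcase m.natAbs m le_rfl hmem

end main

end CanonAux

/-- Suppose `ξ ∈ so(n)` has eigenvalues on `ℂⁿ` exactly `± i j`, `0 ≤ j ≤ k` (case (a)),
or exactly `± i(j+1/2)`, `0 ≤ j ≤ k`, with `± i/2` of multiplicity at least `2` (case (b)).
Then `g_ℓ = [g_1, g_{ℓ-1}]` for every `ℓ > 1`, and `so(n,ℂ)` is generated by
`g_{-1} ⊕ g_0 ⊕ g_1`, i.e. `ξ` is a canonical element. -/
theorem canonical_of_eigenvalue_pattern {n : ℕ} (hn : 3 ≤ n)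
    (ξ : Matrix (Fin n) (Fin n) ℝ) (hskew : ξᵀ = -ξ)
    (hcase :
      (∃ k : ℕ, ∀ lam : ℝ,
        Module.End.HasEigenvalue (Matrix.toLin' (ξ.map (Complex.ofReal)))
            (lam * Complex.I) ↔ ∃ j : ℤ, |j| ≤ (k : ℤ) ∧ lam = (j : ℝ)) ∨
      (∃ k : ℕ, (∀ lam : ℝ,
        Module.End.HasEigenvalue (Matrix.toLin' (ξ.map (Complex.ofReal)))
            (lam * Complex.I) ↔
          ∃ j : ℤ, -(k : ℤ) - 1 ≤ j ∧ j ≤ (k : ℤ) ∧ lam = (j : ℝ) + 1 / 2) ∧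
        2 ≤ Module.finrank ℂ (Module.End.eigenspace
          (Matrix.toLin' (ξ.map (Complex.ofReal))) ((1 / 2 : ℝ) * Complex.I)))) :
    (∀ l : ℤ, 1 < l →
      adEig ξ (l : ℝ) = bracketSpan (adEig ξ 1) (adEig ξ ((l : ℝ) - 1))) ∧
    (LieSubalgebra.lieSpan ℂ (Matrix (Fin n) (Fin n) ℂ)
        ((adEig ξ (-1) : Set (Matrix (Fin n) (Fin n) ℂ))
          ∪ (adEig ξ 0 : Set (Matrix (Fin n) (Fin n) ℂ))
          ∪ (adEig ξ 1 : Set (Matrix (Fin n) (Fin n) ℂ)))).toSubmodule = soC n := by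
  constructor
  · exact CanonAux.part1 hskew hcase
  · apply le_antisymm
    · have hsub : ((adEig ξ (-1) : Set (Matrix (Fin n) (Fin n) ℂ))
          ∪ (adEig ξ 0 : Set (Matrix (Fin n) (Fin n) ℂ))
          ∪ (adEig ξ 1 : Set (Matrix (Fin n) (Fin n) ℂ))) ⊆ (CanonAux.soCLie n : Set _) := by
        rintro B ((hB | hB) | hB)
        · exact (inf_le_left : adEig ξ (-1) ≤ soC n) hB
        · exact (inf_le_left : adEig ξ 0 ≤ soC n) hB
        · exact (inf_le_left : adEig ξ 1 ≤ soC n) hB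
      intro A hA
      exact (LieSubalgebra.lieSpan_le.2 hsub : _ ≤ CanonAux.soCLie n) hA
    · exact CanonAux.soC_le_lieSpan hskew hcase
end
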